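/- arXiv:1803.01149 — 9 statements merged into one kernel-verified Lean document; each statement's English description precedes it below -/
import Mathlib

section
/- For a finite group G and a subgroup H of G, csd(H,G) ≥ |N(G) ∩ L₁(G)| / |L₁(G)|, where N(G) is the set of normal subgroups of G. -/
open scoped Pointwise

/-- Two subgroups permute if their setwise products coincide. -/
def Subgroup.Permutes {G : Type*} [Group G] (A B : Subgroup G) : Prop :=
  (A : Set G) * (B : Set G) = (B : Set G) * (A : Set G)

/-- The relative cyclic subgroup commutativity degree `csd(H,G)`:
the proportion of pairs `(H₁,G₁)` with `H₁` a cyclic subgroup of `H`,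
`G₁` a cyclic subgroup of `G`, such that `H₁G₁ = G₁H₁`. -/
noncomputable def csd {G : Type*} [Group G] (H : Subgroup G) : ℝ :=
  (Nat.card {p : Subgroup G × Subgroup G //
      p.1 ≤ H ∧ IsCyclic p.1 ∧ IsCyclic p.2 ∧ p.1.Permutes p.2} : ℝ) /
  ((Nat.card {K : Subgroup G // K ≤ H ∧ IsCyclic K} : ℝ) *
   (Nat.card {K : Subgroup G // IsCyclic K} : ℝ))

/-- A normal subgroup permutes with every subgroup. -/
lemma permutes_of_normal {G : Type*} [Group G] (K N : Subgroup G) (hN : N.Normal) :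
    K.Permutes N := by
  unfold Subgroup.Permutes
  haveI := hN
  rw [← Subgroup.mul_normal, ← Subgroup.normal_mul, sup_comm]

/-- . -/
theorem csd_ge_normal_cyclic_ratio {G : Type*} [Group G] [Finite G] (H : Subgroup G) :
    csd H ≥ (Nat.card {K : Subgroup G // K.Normal ∧ IsCyclic K} : ℝ) /
      (Nat.card {K : Subgroup G // IsCyclic K} : ℝ) := by
  classical
  set A := {K : Subgroup G // K ≤ H ∧ IsCyclic K}
  set B := {K : Subgroup G // IsCyclic K}
  set NC := {K : Subgroup G // K.Normal ∧ IsCyclic K}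
  set P := {p : Subgroup G × Subgroup G //
      p.1 ≤ H ∧ IsCyclic p.1 ∧ IsCyclic p.2 ∧ p.1.Permutes p.2}
  have hinj : Function.Injective (fun x : A × NC =>
      (⟨(x.1.1, x.2.1), x.1.2.1, x.1.2.2, x.2.2.2,
        permutes_of_normal _ _ x.2.2.1⟩ : P)) := by
    rintro ⟨⟨a, ha⟩, ⟨n, hn⟩⟩ ⟨⟨a', ha'⟩, ⟨n', hn'⟩⟩ h
    simp only [Subtype.mk.injEq, Prod.mk.injEq] at h
    simp [Prod.ext_iff, h.1, h.2]
  have hcard : Nat.card A * Nat.card NC ≤ Nat.card P := by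
    rw [← Nat.card_prod]
    exact Nat.card_le_card_of_injective _ hinj
  have hA : 0 < Nat.card A := Nat.card_pos_iff.2 ⟨⟨⟨⊥, bot_le, inferInstance⟩⟩, inferInstance⟩
  have hB : 0 < Nat.card B := Nat.card_pos_iff.2 ⟨⟨⟨⊥, inferInstance⟩⟩, inferInstance⟩
  unfold csd
  rw [ge_iff_le, div_le_div_iff₀ (by exact_mod_cast hB)
    (by positivity)]
  have h1 : (Nat.card A : ℝ) * Nat.card NC ≤ Nat.card P := by exact_mod_cast hcard
  have h2 : (0:ℝ) < Nat.card A := by exact_mod_cast hA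
  have h3 : (0:ℝ) ≤ (Nat.card B : ℝ) := by positivity
  nlinarith [mul_le_mul_of_nonneg_right h1 h3]
end

section
/- Let G = G₁ × G₂ be a direct product of finite groups G₁, G₂ of coprime orders, and let H = H₁ × H₂ with Hᵢ ≤ Gᵢ. Then csd(H, G) = csd(H₁, G₁) · csd(H₂, G₂). -/
open scoped Pointwise

section Aux

variable {G₁ G₂ : Type*} [Group G₁] [Group G₂]

lemma set_prod_mul_prod (s s' : Set G₁) (t t' : Set G₂) :
    (s ×ˢ t) * (s' ×ˢ t') = (s * s') ×ˢ (t * t') := by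
  ext ⟨x, y⟩
  simp only [Set.mem_mul, Set.mem_prod, Prod.exists, Prod.mk_mul_mk, Prod.mk.injEq]
  constructor
  · rintro ⟨a, b, ⟨ha, hb⟩, c, d, ⟨hc, hd⟩, hx, hy⟩
    exact ⟨⟨a, ha, c, hc, hx⟩, ⟨b, hb, d, hd, hy⟩⟩
  · rintro ⟨⟨a, ha, c, hc, hx⟩, ⟨b, hb, d, hd, hy⟩⟩
    exact ⟨a, b, ⟨ha, hb⟩, c, d, ⟨hc, hd⟩, hx, hy⟩

lemma permutes_prod_iff (A B : Subgroup G₁) (C D : Subgroup G₂) :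
    (A.prod C).Permutes (B.prod D) ↔ A.Permutes B ∧ C.Permutes D := by
  unfold Subgroup.Permutes
  rw [Subgroup.coe_prod, Subgroup.coe_prod, set_prod_mul_prod, set_prod_mul_prod,
    Set.prod_eq_prod_iff_of_nonempty]
  exact ⟨(1, 1), ⟨1, A.one_mem, 1, B.one_mem, mul_one 1⟩,
    ⟨1, C.one_mem, 1, D.one_mem, mul_one 1⟩⟩

lemma map_fst_prod' (A : Subgroup G₁) (B : Subgroup G₂) :
    (A.prod B).map (MonoidHom.fst G₁ G₂) = A := by
  ext a
  constructor
  · rintro ⟨⟨x, y⟩, ⟨hx, _⟩, rfl⟩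
    exact hx
  · intro ha
    exact ⟨(a, 1), ⟨ha, B.one_mem⟩, rfl⟩

lemma map_snd_prod' (A : Subgroup G₁) (B : Subgroup G₂) :
    (A.prod B).map (MonoidHom.snd G₁ G₂) = B := by
  ext b
  constructor
  · rintro ⟨⟨x, y⟩, ⟨_, hy⟩, rfl⟩
    exact hy
  · intro hb
    exact ⟨(1, b), ⟨A.one_mem, hb⟩, rfl⟩

lemma prod_le_prod_iff' (A H₁ : Subgroup G₁) (B H₂ : Subgroup G₂) :
    A.prod B ≤ H₁.prod H₂ ↔ A ≤ H₁ ∧ B ≤ H₂ := by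
  rw [Subgroup.le_prod_iff, map_fst_prod', map_snd_prod']

variable [Finite G₁] [Finite G₂]

lemma left_one_mem (h : Nat.Coprime (Nat.card G₁) (Nat.card G₂))
    {K : Subgroup (G₁ × G₂)} {a : G₁} {b : G₂} (hab : (a, b) ∈ K) :
    ((a, 1) : G₁ × G₂) ∈ K := by
  have hcop : Nat.Coprime (orderOf a) (orderOf b) :=
    (h.coprime_dvd_left (orderOf_dvd_natCard a)).coprime_dvd_right (orderOf_dvd_natCard b)
  obtain ⟨k, hk1, hk0⟩ := Nat.chineseRemainder hcop 1 0
  have : ((a, b) : G₁ × G₂) ^ k = (a, 1) := by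
    rw [Prod.pow_mk]
    refine Prod.ext ?_ ?_
    · simpa using (pow_eq_pow_iff_modEq.mpr hk1 : a ^ k = a ^ 1)
    · exact orderOf_dvd_iff_pow_eq_one.mp ((Nat.modEq_zero_iff_dvd).mp hk0)
  exact this ▸ pow_mem hab k

lemma right_one_mem (h : Nat.Coprime (Nat.card G₁) (Nat.card G₂))
    {K : Subgroup (G₁ × G₂)} {a : G₁} {b : G₂} (hab : (a, b) ∈ K) :
    ((1, b) : G₁ × G₂) ∈ K := by
  have hcop : Nat.Coprime (orderOf a) (orderOf b) :=
    (h.coprime_dvd_left (orderOf_dvd_natCard a)).coprime_dvd_right (orderOf_dvd_natCard b)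
  obtain ⟨k, hk0, hk1⟩ := Nat.chineseRemainder hcop 0 1
  have : ((a, b) : G₁ × G₂) ^ k = (1, b) := by
    rw [Prod.pow_mk]
    refine Prod.ext ?_ ?_
    · exact orderOf_dvd_iff_pow_eq_one.mp ((Nat.modEq_zero_iff_dvd).mp hk0)
    · simpa using (pow_eq_pow_iff_modEq.mpr hk1 : b ^ k = b ^ 1)
  exact this ▸ pow_mem hab k

lemma eq_prod_map (h : Nat.Coprime (Nat.card G₁) (Nat.card G₂)) (K : Subgroup (G₁ × G₂)) :
    K = (K.map (MonoidHom.fst G₁ G₂)).prod (K.map (MonoidHom.snd G₁ G₂)) := by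
  apply le_antisymm
  · rintro ⟨a, b⟩ hab
    exact ⟨⟨(a, b), hab, rfl⟩, ⟨(a, b), hab, rfl⟩⟩
  · rintro ⟨a, b⟩ ⟨ha, hb⟩
    obtain ⟨⟨a', b'⟩, hab', h1⟩ := ha
    obtain ⟨⟨a'', b''⟩, hab'', h2⟩ := hb
    simp only [MonoidHom.coe_fst, MonoidHom.coe_snd] at h1 h2
    have hA : ((a, 1) : G₁ × G₂) ∈ K := h1 ▸ left_one_mem h hab'
    have hB : ((1, b) : G₁ × G₂) ∈ K := h2 ▸ right_one_mem h hab''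
    simpa using K.mul_mem hA hB

lemma isCyclic_prod_iff' (h : Nat.Coprime (Nat.card G₁) (Nat.card G₂))
    (A : Subgroup G₁) (B : Subgroup G₂) :
    IsCyclic (A.prod B) ↔ IsCyclic A ∧ IsCyclic B := by
  have e := A.prodEquiv B
  constructor
  · intro hc
    have : IsCyclic (A × B) := isCyclic_of_surjective e e.surjective
    exact ⟨isCyclic_of_surjective (MonoidHom.fst A B) Prod.fst_surjective,
      isCyclic_of_surjective (MonoidHom.snd A B) Prod.snd_surjective⟩
  · rintro ⟨hA, hB⟩
    have hcop : Nat.Coprime (Nat.card A) (Nat.card B) :=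
      (h.coprime_dvd_left A.card_subgroup_dvd_card).coprime_dvd_right B.card_subgroup_dvd_card
    obtain ⟨a, ha⟩ := isCyclic_iff_exists_orderOf_eq_natCard.mp hA
    obtain ⟨b, hb⟩ := isCyclic_iff_exists_orderOf_eq_natCard.mp hB
    have hord : orderOf ((a, b) : A × B) = Nat.card (A × B) := by
      rw [Prod.orderOf, ha, hb, Nat.Coprime.lcm_eq_mul hcop, Nat.card_prod]
    have : IsCyclic (A × B) := isCyclic_of_orderOf_eq_card _ hord
    exact isCyclic_of_surjective e.symm e.symm.surjective

set_option linter.unusedSectionVars false in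
/-- The structure equivalence for subgroups of a coprime product. -/
noncomputable def subgroupProdEquiv (h : Nat.Coprime (Nat.card G₁) (Nat.card G₂)) :
    Subgroup (G₁ × G₂) ≃ Subgroup G₁ × Subgroup G₂ where
  toFun K := (K.map (MonoidHom.fst G₁ G₂), K.map (MonoidHom.snd G₁ G₂))
  invFun p := p.1.prod p.2
  left_inv K := (eq_prod_map h K).symm
  right_inv p := by simp [map_fst_prod', map_snd_prod']

@[simp] lemma subgroupProdEquiv_apply (h : Nat.Coprime (Nat.card G₁) (Nat.card G₂))
    (K : Subgroup (G₁ × G₂)) :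
    subgroupProdEquiv h K = (K.map (MonoidHom.fst G₁ G₂), K.map (MonoidHom.snd G₁ G₂)) := rfl

end Aux

/-- For a direct product of finite groups of coprime orders,
. -/
theorem csd_prod {G₁ G₂ : Type*} [Group G₁] [Group G₂] [Finite G₁] [Finite G₂]
    (h : Nat.Coprime (Nat.card G₁) (Nat.card G₂))
    (H₁ : Subgroup G₁) (H₂ : Subgroup G₂) :
    csd (H₁.prod H₂) = csd H₁ * csd H₂ := by
  set e := subgroupProdEquiv h with he
  -- counting the cyclic subgroups below H
  have hsub : Nat.card {K : Subgroup (G₁ × G₂) // K ≤ H₁.prod H₂ ∧ IsCyclic K}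
      = Nat.card {K : Subgroup G₁ // K ≤ H₁ ∧ IsCyclic K} *
        Nat.card {K : Subgroup G₂ // K ≤ H₂ ∧ IsCyclic K} := by
    rw [← Nat.card_prod]
    refine Nat.card_congr ((e.subtypeEquiv ?_).trans (Equiv.subtypeProdEquivProd))
    intro K
    obtain ⟨A, B, rfl⟩ : ∃ A B, K = Subgroup.prod A B :=
      ⟨_, _, eq_prod_map h K⟩
    show A.prod B ≤ H₁.prod H₂ ∧ IsCyclic (A.prod B) ↔
      ((A.prod B).map (MonoidHom.fst G₁ G₂) ≤ H₁ ∧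
        IsCyclic ((A.prod B).map (MonoidHom.fst G₁ G₂))) ∧
      ((A.prod B).map (MonoidHom.snd G₁ G₂) ≤ H₂ ∧
        IsCyclic ((A.prod B).map (MonoidHom.snd G₁ G₂)))
    rw [map_fst_prod', map_snd_prod', prod_le_prod_iff', isCyclic_prod_iff' h]
    tauto
  have hall : Nat.card {K : Subgroup (G₁ × G₂) // IsCyclic K}
      = Nat.card {K : Subgroup G₁ // IsCyclic K} *
        Nat.card {K : Subgroup G₂ // IsCyclic K} := by
    rw [← Nat.card_prod]
    refine Nat.card_congr ((e.subtypeEquiv ?_).trans (Equiv.subtypeProdEquivProd))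
    intro K
    obtain ⟨A, B, rfl⟩ : ∃ A B, K = Subgroup.prod A B :=
      ⟨_, _, eq_prod_map h K⟩
    show IsCyclic (A.prod B) ↔
      IsCyclic ((A.prod B).map (MonoidHom.fst G₁ G₂)) ∧
      IsCyclic ((A.prod B).map (MonoidHom.snd G₁ G₂))
    rw [map_fst_prod', map_snd_prod']
    exact isCyclic_prod_iff' h A B
  have hpairs : Nat.card {p : Subgroup (G₁ × G₂) × Subgroup (G₁ × G₂) //
        p.1 ≤ H₁.prod H₂ ∧ IsCyclic p.1 ∧ IsCyclic p.2 ∧ p.1.Permutes p.2}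
      = Nat.card {p : Subgroup G₁ × Subgroup G₁ //
          p.1 ≤ H₁ ∧ IsCyclic p.1 ∧ IsCyclic p.2 ∧ p.1.Permutes p.2} *
        Nat.card {p : Subgroup G₂ × Subgroup G₂ //
          p.1 ≤ H₂ ∧ IsCyclic p.1 ∧ IsCyclic p.2 ∧ p.1.Permutes p.2} := by
    rw [← Nat.card_prod]
    refine Nat.card_congr
      ((((e.prodCongr e).trans (Equiv.prodProdProdComm _ _ _ _)).subtypeEquiv ?_).trans
        (Equiv.subtypeProdEquivProd))
    rintro ⟨K, L⟩
    obtain ⟨A₁, A₂, rfl⟩ : ∃ A₁ A₂, K = Subgroup.prod A₁ A₂ := ⟨_, _, eq_prod_map h K⟩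
    obtain ⟨B₁, B₂, rfl⟩ : ∃ B₁ B₂, L = Subgroup.prod B₁ B₂ := ⟨_, _, eq_prod_map h L⟩
    show A₁.prod A₂ ≤ H₁.prod H₂ ∧ IsCyclic (A₁.prod A₂) ∧ IsCyclic (B₁.prod B₂) ∧
        (A₁.prod A₂).Permutes (B₁.prod B₂) ↔
      ((A₁.prod A₂).map (MonoidHom.fst G₁ G₂) ≤ H₁ ∧
        IsCyclic ((A₁.prod A₂).map (MonoidHom.fst G₁ G₂)) ∧
        IsCyclic ((B₁.prod B₂).map (MonoidHom.fst G₁ G₂)) ∧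
        ((A₁.prod A₂).map (MonoidHom.fst G₁ G₂)).Permutes
          ((B₁.prod B₂).map (MonoidHom.fst G₁ G₂))) ∧
      ((A₁.prod A₂).map (MonoidHom.snd G₁ G₂) ≤ H₂ ∧
        IsCyclic ((A₁.prod A₂).map (MonoidHom.snd G₁ G₂)) ∧
        IsCyclic ((B₁.prod B₂).map (MonoidHom.snd G₁ G₂)) ∧
        ((A₁.prod A₂).map (MonoidHom.snd G₁ G₂)).Permutes
          ((B₁.prod B₂).map (MonoidHom.snd G₁ G₂)))
    rw [map_fst_prod' A₁ A₂, map_snd_prod' A₁ A₂, map_fst_prod' B₁ B₂, map_snd_prod' B₁ B₂,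
      prod_le_prod_iff', isCyclic_prod_iff' h, isCyclic_prod_iff' h, permutes_prod_iff]
    tauto
  unfold csd
  rw [hsub, hall, hpairs]
  push_cast
  rw [div_mul_div_comm]
  ring_nf
end

section
/- For a finite group G, conjugate subgroups have equal relative cyclic subgroup commutativity degree: csd(Hᵍ, G) = csd(H, G) for every H ≤ G and g ∈ G. -/
open scoped Pointwise

lemma isCyclic_smul_iff {G : Type*} [Group G] (a : MulAut G) (K : Subgroup G) :
    IsCyclic (a • K : Subgroup G) ↔ IsCyclic K := by
  constructor
  · intro h
    have := isCyclic_of_surjective _ (Subgroup.equivSMul a⁻¹ (a • K)).surjective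
    rwa [inv_smul_smul] at this
  · intro h
    exact isCyclic_of_surjective _ (Subgroup.equivSMul a K).surjective

lemma permutes_smul_iff {G : Type*} [Group G] (a : MulAut G) (A B : Subgroup G) :
    (a • A : Subgroup G).Permutes (a • B) ↔ A.Permutes B := by
  unfold Subgroup.Permutes
  rw [Subgroup.coe_pointwise_smul, Subgroup.coe_pointwise_smul, ← smul_mul', ← smul_mul']
  exact ⟨fun h => smul_left_cancel a h, fun h => by rw [h]⟩

/-- Conjugate subgroups have equal relative cyclic subgroup commutativity degree. -/
theorem csd_conj {G : Type*} [Group G] [Finite G] (H : Subgroup G) (g : G) :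
    csd (MulAut.conj g • H) = csd H := by
  unfold csd
  set a := MulAut.conj g
  have e1 : {p : Subgroup G × Subgroup G //
      p.1 ≤ a • H ∧ IsCyclic p.1 ∧ IsCyclic p.2 ∧ p.1.Permutes p.2} ≃
      {p : Subgroup G × Subgroup G //
      p.1 ≤ H ∧ IsCyclic p.1 ∧ IsCyclic p.2 ∧ p.1.Permutes p.2} :=
    Equiv.subtypeEquiv
      (Equiv.prodCongr (MulAction.toPerm a⁻¹) (MulAction.toPerm a⁻¹))
      (by
        rintro ⟨A, B⟩
        simp only [Equiv.prodCongr_apply, MulAction.toPerm_apply, Prod.map]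
        constructor
        · rintro ⟨h1, h2, h3, h4⟩
          refine ⟨?_, ?_, ?_, ?_⟩
          · rw [← Subgroup.pointwise_smul_le_pointwise_smul_iff (a := a), smul_inv_smul]
            exact h1
          · exact (isCyclic_smul_iff a⁻¹ A).mpr h2
          · exact (isCyclic_smul_iff a⁻¹ B).mpr h3
          · exact (permutes_smul_iff a⁻¹ A B).mpr h4
        · rintro ⟨h1, h2, h3, h4⟩
          refine ⟨?_, (isCyclic_smul_iff a⁻¹ A).mp h2, (isCyclic_smul_iff a⁻¹ B).mp h3,
            (permutes_smul_iff a⁻¹ A B).mp h4⟩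
          have := Subgroup.pointwise_smul_le_pointwise_smul_iff (a := a) |>.mpr h1
          rwa [smul_inv_smul] at this)
  have e2 : {K : Subgroup G // K ≤ a • H ∧ IsCyclic K} ≃
      {K : Subgroup G // K ≤ H ∧ IsCyclic K} :=
    Equiv.subtypeEquiv (MulAction.toPerm a⁻¹)
      (by
        intro K
        simp only [MulAction.toPerm_apply]
        constructor
        · rintro ⟨h1, h2⟩
          refine ⟨?_, (isCyclic_smul_iff a⁻¹ K).mpr h2⟩
          rw [← Subgroup.pointwise_smul_le_pointwise_smul_iff (a := a), smul_inv_smul]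
          exact h1
        · rintro ⟨h1, h2⟩
          refine ⟨?_, (isCyclic_smul_iff a⁻¹ K).mp h2⟩
          have := Subgroup.pointwise_smul_le_pointwise_smul_iff (a := a) |>.mpr h1
          rwa [smul_inv_smul] at this)
  rw [Nat.card_congr e1, Nat.card_congr e2]
end

section
/- Let G be a finite group such that csd(G) < 1/2 + |N(G) ∩ L₁(G)| / (2|L₁(G)|). Then G has more than two relative cyclic subgroup commutativity degrees, i.e., |{csd(H,G) : H ≤ G}| > 2. -/
open scoped Pointwise

section Aux

variable {G : Type*} [Group G]

lemma permutes_bot (A : Subgroup G) : A.Permutes ⊥ := by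
  simp only [Subgroup.Permutes, Subgroup.coe_bot, Set.singleton_one, mul_one, one_mul]

lemma bot_permutes (A : Subgroup G) : (⊥ : Subgroup G).Permutes A := by
  simp only [Subgroup.Permutes, Subgroup.coe_bot, Set.singleton_one, mul_one, one_mul]

lemma permutes_of_normal_s5 (A : Subgroup G) {N : Subgroup G} (hN : N.Normal) :
    A.Permutes N := by
  haveI := hN
  rw [Subgroup.Permutes, ← Subgroup.mul_normal A N, ← Subgroup.normal_mul N A, sup_comm]

/-- The number of cyclic subgroups permuting with `A`. -/
noncomputable def pcnt (A : Subgroup G) : ℕ :=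
  Nat.card {B : Subgroup G // IsCyclic B ∧ A.Permutes B}

open Classical in
lemma card_pairs (H : Subgroup G) [Fintype (Subgroup G)] :
    Nat.card {p : Subgroup G × Subgroup G //
        p.1 ≤ H ∧ IsCyclic p.1 ∧ IsCyclic p.2 ∧ p.1.Permutes p.2}
      = ∑ K : {K : Subgroup G // K ≤ H ∧ IsCyclic K}, pcnt (K : Subgroup G) := by
  classical
  let e : {p : Subgroup G × Subgroup G //
        p.1 ≤ H ∧ IsCyclic p.1 ∧ IsCyclic p.2 ∧ p.1.Permutes p.2}
      ≃ Σ K : {K : Subgroup G // K ≤ H ∧ IsCyclic K},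
          {B : Subgroup G // IsCyclic B ∧ (K : Subgroup G).Permutes B} :=
    { toFun := fun x => ⟨⟨x.1.1, x.2.1, x.2.2.1⟩, ⟨x.1.2, x.2.2.2.1, x.2.2.2.2⟩⟩
      invFun := fun s => ⟨(s.1.1, s.2.1), s.1.2.1, s.1.2.2, s.2.2.1, s.2.2.2⟩
      left_inv := fun x => rfl
      right_inv := fun s => rfl }
  rw [Nat.card_congr e, Nat.card_eq_fintype_card, Fintype.card_sigma]
  apply Finset.sum_congr rfl
  intro K _
  rw [pcnt, Nat.card_eq_fintype_card]

end Aux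

/-- If , then  has more than two
relative cyclic subgroup commutativity degrees. -/
theorem more_than_two_relative_csd {G : Type*} [Group G] [Finite G]
    (h : csd (⊤ : Subgroup G) <
      1 / 2 + (Nat.card {K : Subgroup G // K.Normal ∧ IsCyclic K} : ℝ) /
        (2 * (Nat.card {K : Subgroup G // IsCyclic K} : ℝ))) :
    2 < (Set.range fun H : Subgroup G => csd H).ncard := by
  classical
  haveI : Fintype (Subgroup G) := Fintype.ofFinite _
  set n := Nat.card {K : Subgroup G // IsCyclic K} with hn
  set m := Nat.card {K : Subgroup G // K.Normal ∧ IsCyclic K} with hm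
  haveI : Nonempty {K : Subgroup G // IsCyclic K} := ⟨⟨⊥, inferInstance⟩⟩
  have hnpos : 0 < n := Nat.card_pos
  have hn0 : (0:ℝ) < (n:ℝ) := by exact_mod_cast hnpos
  have hmn : m ≤ n :=
    Nat.card_le_card_of_injective (fun K => ⟨K.1, K.2.2⟩)
      (fun a b hab => by simpa [Subtype.ext_iff] using hab)
  have hple : ∀ A : Subgroup G, pcnt A ≤ n :=
    fun A => Nat.card_le_card_of_injective (fun B => ⟨B.1, B.2.1⟩)
      (fun a b hab => by simpa [Subtype.ext_iff] using hab)
  have hmp : ∀ A : Subgroup G, m ≤ pcnt A :=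
    fun A => Nat.card_le_card_of_injective
      (fun N => ⟨N.1, N.2.2, permutes_of_normal_s5 A N.2.1⟩)
      (fun a b hab => by simpa [Subtype.ext_iff] using hab)
  -- csd ⊥ = 1
  have hbot : csd (⊥ : Subgroup G) = 1 := by
    have e1 : {p : Subgroup G × Subgroup G //
        p.1 ≤ ⊥ ∧ IsCyclic p.1 ∧ IsCyclic p.2 ∧ p.1.Permutes p.2}
        ≃ {K : Subgroup G // IsCyclic K} :=
      { toFun := fun x => ⟨x.1.2, x.2.2.2.1⟩
        invFun := fun B => ⟨(⊥, B.1), le_rfl, inferInstance, B.2, bot_permutes _⟩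
        left_inv := fun x => by
          have hx : x.1.1 = ⊥ := le_bot_iff.mp x.2.1
          apply Subtype.ext
          exact Prod.ext hx.symm rfl
        right_inv := fun B => rfl }
    have e2 : Nat.card {K : Subgroup G // K ≤ ⊥ ∧ IsCyclic K} = 1 := by
      have huniq : ∀ x : {K : Subgroup G // K ≤ ⊥ ∧ IsCyclic K},
          x = ⟨⊥, le_rfl, inferInstance⟩ := fun x => Subtype.ext (le_bot_iff.mp x.2.1)
      exact Nat.card_eq_one_iff_unique.mpr
        ⟨⟨fun a b => (huniq a).trans (huniq b).symm⟩, ⟨⟨⊥, le_rfl, inferInstance⟩⟩⟩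
    rw [csd, Nat.card_congr e1, e2, ← hn]
    push_cast
    rw [one_mul, div_self (ne_of_gt hn0)]
  -- csd ⊤ < 1
  have hbound1 : (1:ℝ)/2 + (m:ℝ)/(2*(n:ℝ)) ≤ 1 := by
    have hmn' : (m:ℝ) ≤ (n:ℝ) := by exact_mod_cast hmn
    rw [div_add_div _ _ (by norm_num) (by positivity), div_le_one (by positivity)]
    nlinarith
  have htoplt : csd (⊤ : Subgroup G) < 1 := lt_of_lt_of_le h hbound1
  -- there is a cyclic subgroup with pcnt < n
  have hex : ∃ A : Subgroup G, IsCyclic A ∧ pcnt A < n := by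
    by_contra hcon
    push_neg at hcon
    have hall : ∀ A : Subgroup G, IsCyclic A → pcnt A = n :=
      fun A hA => le_antisymm (hple A) (hcon A hA)
    have etop : {K : Subgroup G // K ≤ ⊤ ∧ IsCyclic K} ≃ {K : Subgroup G // IsCyclic K} :=
      Equiv.subtypeEquivRight (fun K => and_iff_right le_top)
    have hnum : Nat.card {p : Subgroup G × Subgroup G //
        p.1 ≤ ⊤ ∧ IsCyclic p.1 ∧ IsCyclic p.2 ∧ p.1.Permutes p.2} = n * n := by
      rw [card_pairs]
      have : ∀ K : {K : Subgroup G // K ≤ ⊤ ∧ IsCyclic K}, pcnt (K : Subgroup G) = n :=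
        fun K => hall K.1 K.2.2
      rw [Finset.sum_congr rfl (fun K _ => this K), Finset.sum_const, Finset.card_univ,
        smul_eq_mul, ← Nat.card_eq_fintype_card, Nat.card_congr etop, ← hn]
    have : csd (⊤ : Subgroup G) = 1 := by
      rw [csd, hnum, Nat.card_congr etop, ← hn]
      push_cast
      rw [div_self (by positivity)]
    rw [this] at htoplt
    exact lt_irrefl _ htoplt
  -- pick a minimal counterexample
  set T : Set ℕ := {k | ∃ A : Subgroup G, (IsCyclic A ∧ pcnt A < n) ∧ Nat.card A = k} with hT
  have hTne : T.Nonempty := by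
    obtain ⟨A, hA1, hA2⟩ := hex
    exact ⟨Nat.card A, A, ⟨hA1, hA2⟩, rfl⟩
  obtain ⟨H, ⟨hHc, hHp⟩, hHcard⟩ := Nat.sInf_mem hTne
  have hmin : ∀ A : Subgroup G, IsCyclic A → pcnt A < n → Nat.card H ≤ Nat.card A := by
    intro A hA1 hA2
    rw [hHcard]
    exact Nat.sInf_le ⟨A, ⟨hA1, hA2⟩, rfl⟩
  -- pcnt ⊥ = n, so H ≠ ⊥
  have hpbot : pcnt (⊥ : Subgroup G) = n := by
    rw [pcnt, hn]
    exact Nat.card_congr (Equiv.subtypeEquivRight (fun B => and_iff_left (bot_permutes B)))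
  have hHbot : H ≠ ⊥ := by
    intro hEq
    rw [hEq, hpbot] at hHp
    exact lt_irrefl _ hHp
  -- proper subgroups of H have pcnt = n
  have hproper : ∀ K : Subgroup G, K ≤ H → K ≠ H → pcnt K = n := by
    intro K hKH hKne
    haveI := hHc
    have hKc : IsCyclic K := by
      haveI : IsCyclic (K.subgroupOf H) := inferInstance
      exact isCyclic_of_surjective (Subgroup.subgroupOfEquivOfLe hKH)
        (Subgroup.subgroupOfEquivOfLe hKH).surjective
    have hKlt : Nat.card K < Nat.card H := by
      have hss : (K : Set G) ⊂ (H : Set G) :=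
        SetLike.coe_ssubset_coe.mpr (lt_of_le_of_ne hKH hKne)
      have h1 : Nat.card K = (K : Set G).ncard := by
        rw [← Nat.card_coe_set_eq]; rfl
      have h2 : Nat.card H = (H : Set G).ncard := by
        rw [← Nat.card_coe_set_eq]; rfl
      rw [h1, h2]
      exact Set.ncard_lt_ncard hss (Set.toFinite _)
    by_contra hne
    have : pcnt K < n := lt_of_le_of_ne (hple K) hne
    exact absurd (hmin K hKc this) (not_le.mpr hKlt)
  -- the number of cyclic subgroups of H
  set t := Nat.card {K : Subgroup G // K ≤ H ∧ IsCyclic K} with ht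
  have ht2 : 2 ≤ t := by
    rw [ht, Nat.card_eq_fintype_card]
    refine Fintype.one_lt_card_iff.mpr ⟨⟨H, le_rfl, hHc⟩, ⟨⊥, bot_le, inferInstance⟩, ?_⟩
    intro hEq
    exact hHbot (congrArg Subtype.val hEq)
  -- numerator for H
  have hnum : Nat.card {p : Subgroup G × Subgroup G //
      p.1 ≤ H ∧ IsCyclic p.1 ∧ IsCyclic p.2 ∧ p.1.Permutes p.2}
      = pcnt H + (t - 1) * n := by
    rw [card_pairs]
    have hmem : (⟨H, le_rfl, hHc⟩ : {K : Subgroup G // K ≤ H ∧ IsCyclic K}) ∈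
        (Finset.univ : Finset {K : Subgroup G // K ≤ H ∧ IsCyclic K}) := Finset.mem_univ _
    rw [← Finset.add_sum_erase _ _ hmem]
    congr 1
    have herase : ∀ K ∈ (Finset.univ : Finset {K : Subgroup G // K ≤ H ∧ IsCyclic K}).erase
        ⟨H, le_rfl, hHc⟩, pcnt (K : Subgroup G) = n := by
      intro K hK
      have hKne : K ≠ ⟨H, le_rfl, hHc⟩ := (Finset.mem_erase.mp hK).1
      exact hproper K.1 K.2.1 (fun hEq => hKne (Subtype.ext hEq))
    rw [Finset.sum_congr rfl herase, Finset.sum_const, smul_eq_mul,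
      Finset.card_erase_of_mem hmem, Finset.card_univ, ← Nat.card_eq_fintype_card, ← ht]
  -- bounds on csd H
  have hcsdH : csd H = ((pcnt H : ℝ) + ((t:ℝ) - 1) * (n:ℝ)) / ((t:ℝ) * (n:ℝ)) := by
    rw [csd, hnum, ← ht, ← hn, Nat.cast_add, Nat.cast_mul,
      Nat.cast_sub (by omega : 1 ≤ t), Nat.cast_one]
  have ht2' : (2:ℝ) ≤ (t:ℝ) := by exact_mod_cast ht2
  have hmn' : (m:ℝ) ≤ (n:ℝ) := by exact_mod_cast hmn
  have hmpH : (m:ℝ) ≤ (pcnt H : ℝ) := by exact_mod_cast hmp H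
  have hpHn : (pcnt H : ℝ) < (n:ℝ) := by exact_mod_cast hHp
  have htpos : (0:ℝ) < (t:ℝ) := lt_of_lt_of_le (by norm_num) ht2'
  have hHlt1 : csd H < 1 := by
    rw [hcsdH, div_lt_one (by positivity)]
    nlinarith
  have hHge : (1:ℝ)/2 + (m:ℝ)/(2*(n:ℝ)) ≤ csd H := by
    rw [hcsdH]
    rw [div_add_div _ _ (by norm_num) (by positivity), div_le_div_iff₀ (by positivity) (by positivity)]
    nlinarith [mul_nonneg (mul_nonneg (sub_nonneg.mpr ht2') (sub_nonneg.mpr hmn')) (le_of_lt hn0)]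
  have htopH : csd (⊤ : Subgroup G) < csd H := lt_of_lt_of_le h hHge
  -- conclude
  have hsub : ({csd (⊤ : Subgroup G), csd H, (1:ℝ)} : Set ℝ) ⊆
      Set.range fun H : Subgroup G => csd H := by
    intro x hx
    rcases hx with rfl | rfl | rfl
    · exact ⟨⊤, rfl⟩
    · exact ⟨H, rfl⟩
    · exact ⟨⊥, hbot⟩
  have h3 : ({csd (⊤ : Subgroup G), csd H, (1:ℝ)} : Set ℝ).ncard = 3 := by
    have hnm : csd (⊤ : Subgroup G) ∉ ({csd H, (1:ℝ)} : Set ℝ) := by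
      simp only [Set.mem_insert_iff, Set.mem_singleton_iff, not_or]
      exact ⟨ne_of_lt htopH, ne_of_lt htoplt⟩
    rw [Set.ncard_insert_of_notMem hnm (Set.toFinite _), Set.ncard_pair (ne_of_lt hHlt1)]
  have := Set.ncard_le_ncard hsub (Set.finite_range _)
  omega
end

section
/- Fix an integer n ≥ 4. The function g : [2,∞) → ℝ defined by g(x) = (x(n + 2^{n-2}) + 2^{x-2}(n+2)) / (x + 2^{x-2}) is strictly decreasing on [2,∞). -/
private lemma f_strictMono :
    StrictMonoOn (fun t : ℝ => (t - 2) * Real.log 2 - Real.log t) (Set.Ici 2) := by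
  apply strictMonoOn_of_deriv_pos (convex_Ici 2)
  · apply ContinuousOn.sub
    · exact (continuousOn_id.sub continuousOn_const).mul continuousOn_const
    · apply Real.continuousOn_log.mono
      intro t ht
      simp only [Set.mem_Ici] at ht
      simp only [Set.mem_compl_iff, Set.mem_singleton_iff]
      intro h; rw [h] at ht; linarith
  · intro t ht
    rw [interior_Ici] at ht
    simp only [Set.mem_Ioi] at ht
    have ht0 : t ≠ 0 := by linarith
    have hd : HasDerivAt (fun t : ℝ => (t - 2) * Real.log 2 - Real.log t)
        (1 * Real.log 2 - t⁻¹) t := by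
      exact (((hasDerivAt_id t).sub_const 2).mul_const (Real.log 2)).sub
        (Real.hasDerivAt_log ht0)
    rw [hd.deriv]
    have hlog : (0.6931471803 : ℝ) < Real.log 2 := Real.log_two_gt_d9
    have : t⁻¹ < 2⁻¹ := by
      apply inv_strictAnti₀ <;> linarith
    nlinarith

private lemma key_ineq {x y : ℝ} (hx : 2 ≤ x) (hxy : x < y) :
    (2 : ℝ) ^ (x - 2) * y < (2 : ℝ) ^ (y - 2) * x := by
  have hy : 2 ≤ y := hx.trans hxy.le
  have hx0 : (0 : ℝ) < x := by linarith
  have hy0 : (0 : ℝ) < y := by linarith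
  have hf := f_strictMono (Set.mem_Ici.mpr hx) (Set.mem_Ici.mpr hy) hxy
  have hex : (2 : ℝ) ^ (x - 2) / x = Real.exp ((x - 2) * Real.log 2 - Real.log x) := by
    rw [Real.rpow_def_of_pos (by norm_num : (0:ℝ) < 2), Real.exp_sub, Real.exp_log hx0,
      mul_comm]
  have hey : (2 : ℝ) ^ (y - 2) / y = Real.exp ((y - 2) * Real.log 2 - Real.log y) := by
    rw [Real.rpow_def_of_pos (by norm_num : (0:ℝ) < 2), Real.exp_sub, Real.exp_log hy0,
      mul_comm]
  have hdiv : (2 : ℝ) ^ (x - 2) / x < (2 : ℝ) ^ (y - 2) / y := by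
    rw [hex, hey]
    exact Real.exp_lt_exp.mpr hf
  rw [div_lt_div_iff₀ hx0 hy0] at hdiv
  linarith

/-- For fixed integer `n ≥ 4`, the function
`g(x) = (x(n + 2^(n-2)) + 2^(x-2)(n+2)) / (x + 2^(x-2))`
is strictly decreasing on `[2,∞)`, where `2^(x-2)` is the real power. -/
theorem g_strictAntiOn (n : ℕ) (hn : 4 ≤ n) :
    StrictAntiOn (fun x : ℝ =>
        (x * ((n : ℝ) + 2 ^ (n - 2)) + (2 : ℝ) ^ (x - 2) * ((n : ℝ) + 2)) /
          (x + (2 : ℝ) ^ (x - 2)))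
      (Set.Ici (2 : ℝ)) := by
  intro x hx y hy hxy
  simp only [Set.mem_Ici] at hx hy
  have hpx : (0 : ℝ) < (2 : ℝ) ^ (x - 2) := Real.rpow_pos_of_pos (by norm_num) _
  have hpy : (0 : ℝ) < (2 : ℝ) ^ (y - 2) := Real.rpow_pos_of_pos (by norm_num) _
  have hdx : (0 : ℝ) < x + (2 : ℝ) ^ (x - 2) := by linarith
  have hdy : (0 : ℝ) < y + (2 : ℝ) ^ (y - 2) := by linarith
  have hAB : (n : ℝ) + 2 < (n : ℝ) + 2 ^ (n - 2) := by
    have h2 : 2 ≤ n - 2 := by omega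
    have : (2 : ℝ) ^ 2 ≤ (2 : ℝ) ^ (n - 2) :=
      pow_le_pow_right₀ (by norm_num) h2
    norm_num at this
    linarith
  have hkey := key_ineq hx hxy
  rw [div_lt_div_iff₀ hdy hdx]
  nlinarith [mul_pos (sub_pos.mpr hAB) (sub_pos.mpr hkey)]
end

section
/- Fix an integer n ≥ 4. The values rᵢ = (i(n + 2^{n-2}) + 2^{i-2}(n+2)) / ((i + 2^{i-2})(n + 2^{n-2})) for i = 2, 3, …, n are pairwise distinct, and rₙ ≠ 1. In particular, r₂ > r₃ > … > rₙ > 1 does not collapse: there are exactly n-1 distinct values among r₂,…,rₙ, none equal to 1. -/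
private lemma keynat (i k : ℕ) (hi : 2 ≤ i) : i + k + 1 < i * 2 ^ (k + 1) := by
  induction k with
  | zero => simp [pow_succ]; omega
  | succ k ih => rw [pow_succ]; nlinarith [ih]

private lemma key (i j : ℕ) (hi : 2 ≤ i) (hij : i < j) :
    j * 2 ^ (i - 2) < i * 2 ^ (j - 2) := by
  obtain ⟨k, rfl⟩ : ∃ k, j = i + k + 1 := ⟨j - i - 1, by omega⟩
  have h2 : i + k + 1 - 2 = (i - 2) + (k + 1) := by omega
  rw [h2, pow_add, ← mul_assoc]
  have hp : 0 < 2 ^ (i - 2) := Nat.pow_pos (by norm_num)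
  have := keynat i k hi
  calc (i + k + 1) * 2 ^ (i - 2) < (i * 2 ^ (k + 1)) * 2 ^ (i - 2) := by
        exact Nat.mul_lt_mul_of_lt_of_le this (le_refl _) hp
    _ = i * 2 ^ (i - 2) * 2 ^ (k + 1) := by ring

private lemma r_anti (n i j : ℕ) (hn : 4 ≤ n) (hi : 2 ≤ i) (hij : i < j) (hj : j ≤ n) :
    ((j : ℝ) * ((n : ℝ) + 2 ^ (n - 2)) + 2 ^ (j - 2) * ((n : ℝ) + 2)) /
        (((j : ℝ) + 2 ^ (j - 2)) * ((n : ℝ) + 2 ^ (n - 2))) <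
      ((i : ℝ) * ((n : ℝ) + 2 ^ (n - 2)) + 2 ^ (i - 2) * ((n : ℝ) + 2)) /
        (((i : ℝ) + 2 ^ (i - 2)) * ((n : ℝ) + 2 ^ (n - 2))) := by
  set A : ℝ := (n : ℝ) + 2 ^ (n - 2) with hAdef
  have hA : (0 : ℝ) < A := by positivity
  have hpow : (2 : ℝ) ^ 2 ≤ 2 ^ (n - 2) := pow_le_pow_right₀ one_le_two (by omega)
  have hAB : ((n : ℝ) + 2) < A := by
    have : (4 : ℝ) ≤ 2 ^ (n - 2) := by norm_num at hpow ⊢; linarith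
    simp only [hAdef]; linarith
  have hkey : (j : ℝ) * 2 ^ (i - 2) < (i : ℝ) * 2 ^ (j - 2) := by
    have := key i j hi hij
    exact_mod_cast this
  have hdi : (0 : ℝ) < ((i : ℝ) + 2 ^ (i - 2)) := by positivity
  have hdj : (0 : ℝ) < ((j : ℝ) + 2 ^ (j - 2)) := by positivity
  rw [div_lt_div_iff₀ (by positivity) (by positivity)]
  have h : (0 : ℝ) < A * (A - ((n : ℝ) + 2)) * ((i : ℝ) * 2 ^ (j - 2) - (j : ℝ) * 2 ^ (i - 2)) :=
    mul_pos (mul_pos hA (by linarith)) (by linarith)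
  nlinarith [h]

/-- For fixed `n ≥ 4`, the values
`rᵢ = (i(n + 2^(n-2)) + 2^(i-2)(n+2)) / ((i + 2^(i-2))(n + 2^(n-2)))`,
`i = 2, …, n`, are pairwise distinct, `rₙ ≠ 1`, and there are exactly
`n - 1` distinct values among them. -/
theorem quaternion_relative_csd_distinct (n : ℕ) (hn : 4 ≤ n) :
    let r : ℕ → ℝ := fun i =>
      ((i : ℝ) * ((n : ℝ) + 2 ^ (n - 2)) + 2 ^ (i - 2) * ((n : ℝ) + 2)) /
        (((i : ℝ) + 2 ^ (i - 2)) * ((n : ℝ) + 2 ^ (n - 2)))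
    (∀ i j, 2 ≤ i → i ≤ n → 2 ≤ j → j ≤ n → i ≠ j → r i ≠ r j) ∧
      r n ≠ 1 ∧ {x : ℝ | ∃ i, 2 ≤ i ∧ i ≤ n ∧ r i = x}.ncard = n - 1 := by
  intro r
  have hanti : ∀ i j, 2 ≤ i → i < j → j ≤ n → r j < r i := fun i j hi hij hj =>
    r_anti n i j hn hi hij hj
  have hdist : ∀ i j, 2 ≤ i → i ≤ n → 2 ≤ j → j ≤ n → i ≠ j → r i ≠ r j := by
    intro i j hi hin hj hjn hne
    rcases lt_or_gt_of_ne hne with h | h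
    · exact ne_of_gt (hanti i j hi h hjn)
    · exact ne_of_lt (hanti j i hj h hin)
  refine ⟨hdist, ?_, ?_⟩
  · -- r n < 1
    have hA : (0 : ℝ) < (n : ℝ) + 2 ^ (n - 2) := by positivity
    have hpow : (2 : ℝ) ^ 2 ≤ 2 ^ (n - 2) := pow_le_pow_right₀ one_le_two (by omega)
    have hAB : ((n : ℝ) + 2) < (n : ℝ) + 2 ^ (n - 2) := by norm_num at hpow ⊢; linarith
    have hc : (0 : ℝ) < 2 ^ (n - 2) := by positivity
    have : r n < 1 := by
      show _ / _ < 1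
      rw [div_lt_one (by positivity)]
      nlinarith [mul_pos hc (sub_pos.2 hAB)]
    exact ne_of_lt this
  · -- cardinality
    have hset : {x : ℝ | ∃ i, 2 ≤ i ∧ i ≤ n ∧ r i = x} = ↑((Finset.Icc 2 n).image r) := by
      ext x
      simp [Finset.mem_image, Finset.mem_Icc, and_assoc]
    rw [hset, Set.ncard_coe_finset, Finset.card_image_of_injOn, Nat.card_Icc]
    · omega
    · intro i hi j hj hrij
      simp only [Finset.coe_Icc, Set.mem_Icc] at hi hj
      by_contra hne
      exact hdist i j hi.1 hi.2 hj.1 hj.2 hne hrij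
end

section
/- The function h : [4,∞) → ℝ defined by h(x) = (x² + (x+1)·2^{x-1}) / (x + 2^{x-1})² is strictly decreasing on [4,∞). -/
private lemma h_key (x y : ℝ) (hx : 4 ≤ x) (hxy : x < y) :
    y * (2:ℝ) ^ (x - 1) < x * (2:ℝ) ^ (y - 1) := by
  have h2 : (0:ℝ) < 2 := by norm_num
  have hd : (2:ℝ) ^ (y - 1) = (2:ℝ) ^ (x - 1) * (2:ℝ) ^ (y - x) := by
    rw [← Real.rpow_add h2]; ring_nf
  have hexp : (2:ℝ) ^ (y - x) = Real.exp ((y - x) * Real.log 2) := by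
    rw [Real.rpow_def_of_pos h2]; ring_nf
  have hlog : (0.6931471803:ℝ) < Real.log 2 := Real.log_two_gt_d9
  have hne : (y - x) * Real.log 2 ≠ 0 := by
    have : 0 < (y - x) * Real.log 2 := by
      apply mul_pos (by linarith) (by linarith)
    exact ne_of_gt this
  have h1 : (y - x) * Real.log 2 + 1 < Real.exp ((y - x) * Real.log 2) :=
    Real.add_one_lt_exp hne
  have hpos : (0:ℝ) < (2:ℝ) ^ (x - 1) := Real.rpow_pos_of_pos h2 _
  rw [hd, hexp]
  have hE : 1 + (y - x) * (1/4) < Real.exp ((y - x) * Real.log 2) := by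
    nlinarith [mul_pos (sub_pos.mpr hxy) (show (0:ℝ) < Real.log 2 - 1/4 by linarith)]
  have hxE : y < x * Real.exp ((y - x) * Real.log 2) := by
    nlinarith [mul_lt_mul_of_pos_left hE (show (0:ℝ) < x by linarith),
      mul_nonneg (show (0:ℝ) ≤ x - 4 by linarith) (show (0:ℝ) ≤ y - x by linarith)]
  nlinarith [mul_lt_mul_of_pos_right hxE hpos]

/-- The function `h(x) = (x² + (x+1)·2^(x-1)) / (x + 2^(x-1))²`
is strictly decreasing on `[4,∞)`, where `2^(x-1)` is the real power. -/
theorem h_strictAntiOn :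
    StrictAntiOn (fun x : ℝ =>
        (x ^ 2 + (x + 1) * (2 : ℝ) ^ (x - 1)) / (x + (2 : ℝ) ^ (x - 1)) ^ 2)
      (Set.Ici (4 : ℝ)) := by
  intro x hx y hy hxy
  simp only [Set.mem_Ici] at hx hy
  set tx := (2:ℝ) ^ (x - 1) with htx
  set ty := (2:ℝ) ^ (y - 1) with hty
  have htxpos : 0 < tx := Real.rpow_pos_of_pos (by norm_num) _
  have htypos : 0 < ty := Real.rpow_pos_of_pos (by norm_num) _
  have htlt : tx < ty := by
    apply Real.rpow_lt_rpow_of_exponent_lt (by norm_num) (by linarith)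
  have hsx : (0:ℝ) < x + tx := by linarith
  have hsy : (0:ℝ) < y + ty := by linarith
  have hkey : y * tx < x * ty := h_key x y hx hxy
  have hrw : ∀ z t : ℝ, 0 < z + t →
      (z ^ 2 + (z + 1) * t) / (z + t) ^ 2 = 1 - t / (z + t) * ((z + t - 1) / (z + t)) := by
    intro z t h
    field_simp
    ring
  show (y ^ 2 + (y + 1) * ty) / (y + ty) ^ 2 < (x ^ 2 + (x + 1) * tx) / (x + tx) ^ 2
  rw [hrw y ty hsy, hrw x tx hsx]
  have hu : tx / (x + tx) < ty / (y + ty) := by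
    rw [div_lt_div_iff₀ hsx hsy]
    nlinarith
  have hv : (x + tx - 1) / (x + tx) < (y + ty - 1) / (y + ty) := by
    rw [div_lt_div_iff₀ hsx hsy]
    nlinarith
  have hu0 : 0 ≤ tx / (x + tx) := by positivity
  have hv0 : 0 ≤ (x + tx - 1) / (x + tx) := by
    apply div_nonneg (by linarith) hsx.le
  have := mul_lt_mul'' hu hv hu0 hv0
  linarith
end

section
/- For integers i ≠ j with 4 ≤ i, j, the values (i² + (i+1)·2^{i-1})/(i + 2^{i-1})² and (j² + (j+1)·2^{j-1})/(j + 2^{j-1})² are distinct. -/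
noncomputable def qcsd (n : ℕ) : ℝ :=
  ((n : ℝ) ^ 2 + ((n : ℝ) + 1) * 2 ^ (n - 1)) / ((n : ℝ) + 2 ^ (n - 1)) ^ 2

lemma qcsd_step (n : ℕ) (hn : 1 ≤ n) : qcsd (n + 1) < qcsd n := by
  unfold qcsd
  have h1 : n + 1 - 1 = n := by omega
  have h2 : n - 1 + 1 = n := by omega
  set a : ℝ := (n : ℝ) with ha
  have han : (1 : ℝ) ≤ a := by rw [ha]; exact_mod_cast hn
  set m : ℝ := (2 : ℝ) ^ (n - 1) with hm
  have hmpos : (0 : ℝ) < m := by positivity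
  have h2n : (2 : ℝ) ^ n = 2 * m := by
    rw [hm, ← pow_succ', h2]
  rw [h1, h2n]
  have hd1 : (0 : ℝ) < (a + 1 + 2 * m) ^ 2 := by positivity
  have hd2 : (0 : ℝ) < (a + m) ^ 2 := by positivity
  have hcast : ((n + 1 : ℕ) : ℝ) = a + 1 := by push_cast [ha]; ring
  rw [hcast, div_lt_div_iff₀ hd1 hd2]
  nlinarith [mul_pos hmpos hmpos, mul_pos (mul_pos hmpos hmpos) hmpos,
    mul_pos (mul_pos hmpos hmpos) (lt_of_lt_of_le one_pos han),
    mul_pos hmpos (lt_of_lt_of_le one_pos han), sq_nonneg (a - 1), sq_nonneg m]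

lemma qcsd_strictAnti : StrictAntiOn qcsd (Set.Ici 1) := by
  have : ∀ k l : ℕ, 1 ≤ k → k < l → qcsd l < qcsd k := by
    intro k l hk hkl
    induction l with
    | zero => omega
    | succ l ih =>
      rcases Nat.lt_or_ge k l with h | h
      · exact (qcsd_step l (by omega)).trans (ih h)
      · have : k = l := by omega
        subst this
        exact qcsd_step k hk
  intro k hk l hl hkl
  exact this k l hk hkl

/-- For integers `i ≠ j` with `4 ≤ i, j`, the values
`(i² + (i+1)·2^(i-1))/(i + 2^(i-1))²` and `(j² + (j+1)·2^(j-1))/(j + 2^(j-1))²`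
are distinct. -/
theorem quaternion_csd_values_distinct (i j : ℕ) (hi : 4 ≤ i) (hj : 4 ≤ j)
    (hij : i ≠ j) :
    ((i : ℝ) ^ 2 + ((i : ℝ) + 1) * 2 ^ (i - 1)) / ((i : ℝ) + 2 ^ (i - 1)) ^ 2 ≠
      ((j : ℝ) ^ 2 + ((j : ℝ) + 1) * 2 ^ (j - 1)) / ((j : ℝ) + 2 ^ (j - 1)) ^ 2 := by
  have key : qcsd i ≠ qcsd j := by
    rcases Nat.lt_or_ge i j with h | h
    · exact ne_of_gt (qcsd_strictAnti (by simp; omega) (by simp; omega) h)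
    · have h' : j < i := by omega
      exact ne_of_lt (qcsd_strictAnti (by simp; omega) (by simp; omega) h')
  exact key
end

section
/- For n ≥ 1 a positive integer and p, q primes with q | p − 1, the two quantities (n(2n+p) + 2n + 1)/((n+1)(2n+p)) and (2n(2n+p) + p(2n+1))/(2n+p)² are never equal. -/
/-- For `n ≥ 1` and primes `p, q` with `q ∣ p − 1`, the quantities
`(n(2n+p) + 2n + 1)/((n+1)(2n+p))` and `(2n(2n+p) + p(2n+1))/(2n+p)²`
are never equal. -/
theorem relative_csd_values_distinct (n p q : ℕ) (hn : 1 ≤ n)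
    (hp : p.Prime) (hq : q.Prime) (hdvd : q ∣ p - 1) :
    ((n : ℝ) * (2 * n + p) + 2 * n + 1) / (((n : ℝ) + 1) * (2 * n + p)) ≠
      (2 * (n : ℝ) * (2 * n + p) + (p : ℝ) * (2 * n + 1)) / ((2 * n + p : ℝ)) ^ 2 := by
  have hpne2 : p ≠ 2 := by
    rintro rfl
    simp at hdvd
    exact hq.ne_one hdvd
  have hp3 : 3 ≤ p := by
    have := hp.two_le
    omega
  have hn' : (1 : ℝ) ≤ (n : ℝ) := by exact_mod_cast hn
  have hp' : (3 : ℝ) ≤ (p : ℝ) := by exact_mod_cast hp3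
  have hs : (0 : ℝ) < 2 * n + p := by nlinarith
  have hn1 : (0 : ℝ) < (n : ℝ) + 1 := by nlinarith
  intro h
  rw [div_eq_div_iff (by positivity) (by positivity)] at h
  have key : (2*(n:ℝ)+p) * ((n:ℝ)*(((p:ℝ)-1)*((p:ℝ)-2))) = 0 := by linear_combination h
  have hpos : 0 < (2*(n:ℝ)+p) * ((n:ℝ)*(((p:ℝ)-1)*((p:ℝ)-2))) := by
    apply mul_pos hs
    apply mul_pos (by linarith)
    exact mul_pos (by linarith) (by linarith)
  linarith
end
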